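/- In ℝ², the function φ(x) = −2√(1−x²) on the segment 𝔻₁ = (−1,1) satisfies (1/2π) f.p.∫_{𝔻₁\(x−η,x+η)} φ(y)/|x−y|² dy → 1 (as η ↓ 0) for all x ∈ (−1,1), and ∫_{−1}^{1} φ(x) dx = −π. -/

import Mathlib

open MeasureTheory Set Real Filter Topology

noncomputable section

/-- The 2d equilibrium dipole distribution `φ(x) = -2√(1-x²)` on the segment `(-1,1)`. -/
def phiDip (x : ℝ) : ℝ := -2 * Real.sqrt (1 - x ^ 2)

/-- Explicit antiderivative of `√(1-y²)/(x-y)²`. -/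
def Faux (x y : ℝ) : ℝ :=
  Real.sqrt (1 - y ^ 2) / (x - y) - Real.arcsin y +
    (x / Real.sqrt (1 - x ^ 2)) *
      (Real.log (1 - x * y + Real.sqrt (1 - x ^ 2) * Real.sqrt (1 - y ^ 2)) - Real.log (x - y))

lemma sqrt_deriv {y : ℝ} (hy : y ∈ Ioo (-1:ℝ) 1) :
    HasDerivAt (fun t : ℝ => Real.sqrt (1 - t ^ 2)) (-y / Real.sqrt (1 - y ^ 2)) y := by
  have h1 : (0:ℝ) < 1 - y ^ 2 := by nlinarith [hy.1, hy.2]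
  have hinner : HasDerivAt (fun t : ℝ => 1 - t ^ 2) (-(2 * y)) y := by
    simpa using ((hasDerivAt_pow 2 y).const_sub 1)
  have := (Real.hasDerivAt_sqrt h1.ne').comp y hinner
  refine this.congr_deriv ?_
  field_simp

lemma Faux_hasDeriv {x y : ℝ} (hx : x ∈ Ioo (-1:ℝ) 1) (hy : y ∈ Ioo (-1:ℝ) 1) (hxy : y ≠ x) :
    HasDerivAt (Faux x) (Real.sqrt (1 - y ^ 2) / (x - y) ^ 2) y := by
  have hs2 : (0:ℝ) < 1 - x ^ 2 := by nlinarith [hx.1, hx.2]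
  have hu2 : (0:ℝ) < 1 - y ^ 2 := by nlinarith [hy.1, hy.2]
  set s := Real.sqrt (1 - x ^ 2) with hs_def
  set u := Real.sqrt (1 - y ^ 2) with hu_def
  have hs : 0 < s := Real.sqrt_pos.mpr hs2
  have hu : 0 < u := Real.sqrt_pos.mpr hu2
  have hssq : s ^ 2 = 1 - x ^ 2 := Real.sq_sqrt hs2.le
  have husq : u ^ 2 = 1 - y ^ 2 := Real.sq_sqrt hu2.le
  have hxmy : x - y ≠ 0 := sub_ne_zero.mpr (Ne.symm hxy)
  have hA : 1 - x * y + s * u > 0 := by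
    have hxy1 : x * y < 1 := by nlinarith [sq_nonneg (x - y), hx.1, hx.2, hy.1, hy.2]
    nlinarith [mul_pos hs hu]
  have hU : HasDerivAt (fun t : ℝ => Real.sqrt (1 - t ^ 2)) (-y / u) y := sqrt_deriv hy
  have hV : HasDerivAt (fun t : ℝ => x - t) (-1) y := by
    simpa using ((hasDerivAt_id y).const_sub x)
  have hdiv : HasDerivAt (fun t : ℝ => Real.sqrt (1 - t ^ 2) / (x - t))
      (((-y / u) * (x - y) - u * (-1)) / (x - y) ^ 2) y := hU.div hV hxmy
  have harc : HasDerivAt Real.arcsin (1 / Real.sqrt (1 - y ^ 2)) y :=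
    Real.hasDerivAt_arcsin (ne_of_gt hy.1) (ne_of_lt hy.2)
  have hAder : HasDerivAt (fun t : ℝ => 1 - x * t + s * Real.sqrt (1 - t ^ 2))
      (-x + s * (-y / u)) y := by
    have h1 : HasDerivAt (fun t : ℝ => 1 - x * t) (-x) y := by
      simpa using ((hasDerivAt_id y).const_mul x).const_sub 1
    exact h1.add (hU.const_mul s)
  have hlogA : HasDerivAt (fun t : ℝ => Real.log (1 - x * t + s * Real.sqrt (1 - t ^ 2)))
      ((-x + s * (-y / u)) / (1 - x * y + s * u)) y := hAder.log hA.ne'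
  have hlogB : HasDerivAt (fun t : ℝ => Real.log (x - t)) ((-1) / (x - y)) y := hV.log hxmy
  have hD : HasDerivAt (Faux x)
      ((((-y / u) * (x - y) - u * (-1)) / (x - y) ^ 2) - 1 / u +
        (x / s) * ((-x + s * (-y / u)) / (1 - x * y + s * u) - (-1) / (x - y))) y := by
    unfold Faux
    exact ((hdiv.sub (by simpa [hu_def] using harc)).add (((hlogA.sub hlogB)).const_mul (x / s)))
  convert hD using 1
  have key : (-x + s * (-y / u)) / (1 - x * y + s * u) - (-1) / (x - y) = s / (u * (x - y)) := by
    rw [div_sub_div _ _ hA.ne' hxmy, div_eq_div_iff (mul_ne_zero hA.ne' hxmy) (mul_ne_zero hu.ne' hxmy)]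
    field_simp
    linear_combination s * husq - u * hssq
  rw [key]
  field_simp
  ring

lemma Faux_contOn {x : ℝ} (hx : x ∈ Ioo (-1:ℝ) 1) :
    ContinuousOn (Faux x) (Icc (-1:ℝ) 1 \ {x}) := by
  have hs2 : (0:ℝ) < 1 - x ^ 2 := by nlinarith [hx.1, hx.2]
  have hsqrt : Continuous (fun y : ℝ => Real.sqrt (1 - y ^ 2)) :=
    Real.continuous_sqrt.comp (continuous_const.sub (continuous_pow 2))
  have hxy : ∀ y ∈ Icc (-1:ℝ) 1 \ {x}, x - y ≠ 0 := by
    intro y hy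
    exact sub_ne_zero.mpr (Ne.symm hy.2)
  have hApos : ∀ y ∈ Icc (-1:ℝ) 1 \ {x},
      1 - x * y + Real.sqrt (1 - x ^ 2) * Real.sqrt (1 - y ^ 2) ≠ 0 := by
    intro y hy
    have h1 : x * y < 1 := by
      nlinarith [sq_nonneg (x - y), sq_nonneg (x + y), hx.1, hx.2, hy.1.1, hy.1.2]
    have h2 : 0 ≤ Real.sqrt (1 - x ^ 2) * Real.sqrt (1 - y ^ 2) :=
      mul_nonneg (Real.sqrt_nonneg _) (Real.sqrt_nonneg _)
    nlinarith
  apply ContinuousOn.add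
  · apply ContinuousOn.sub
    · exact ContinuousOn.div hsqrt.continuousOn
        (continuous_const.sub continuous_id).continuousOn hxy
    · exact Real.continuous_arcsin.continuousOn
  · apply ContinuousOn.mul continuousOn_const
    apply ContinuousOn.sub
    · exact ContinuousOn.log
        ((continuous_const.sub (continuous_const.mul continuous_id)).continuousOn.add
          (continuous_const.mul hsqrt).continuousOn) hApos
    · exact ContinuousOn.log (continuous_const.sub continuous_id).continuousOn hxy

lemma Faux_ftc {x a b : ℝ} (hx : x ∈ Ioo (-1:ℝ) 1) (h1 : -1 ≤ a) (hab : a ≤ b) (hb : b ≤ 1)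
    (hxout : x ∉ Icc a b) :
    ∫ y in a..b, Real.sqrt (1 - y ^ 2) / (x - y) ^ 2 = Faux x b - Faux x a := by
  have hsub : Icc a b ⊆ Icc (-1:ℝ) 1 \ {x} := by
    intro y hy
    exact ⟨⟨le_trans h1 hy.1, le_trans hy.2 hb⟩, fun h => hxout (h ▸ hy)⟩
  apply intervalIntegral.integral_eq_sub_of_hasDeriv_right_of_le hab
    ((Faux_contOn hx).mono hsub)
  · intro y hy
    have hy' : y ∈ Ioo (-1:ℝ) 1 := ⟨lt_of_le_of_lt h1 hy.1, lt_of_lt_of_le hy.2 hb⟩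
    have hyx : y ≠ x := fun h => hxout (h ▸ Ioo_subset_Icc_self hy)
    exact (Faux_hasDeriv hx hy' hyx).hasDerivWithinAt
  · apply ContinuousOn.intervalIntegrable
    rw [uIcc_of_le hab]
    apply ContinuousOn.div
    · exact (Real.continuous_sqrt.comp (continuous_const.sub (continuous_pow 2))).continuousOn
    · exact ((continuous_const.sub continuous_id).pow 2).continuousOn
    · intro y hy
      have hyx : y ≠ x := fun h => hxout (h ▸ hy)
      exact pow_ne_zero _ (sub_ne_zero.mpr (Ne.symm hyx))

lemma Faux_one {x : ℝ} (hx : x ∈ Ioo (-1:ℝ) 1) : Faux x 1 = -(π/2) := by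
  have h0 : (1:ℝ) - 1 ^ 2 = 0 := by norm_num
  have hlog : Real.log (x - 1) = Real.log (1 - x) := by
    rw [show x - 1 = -(1 - x) by ring, Real.log_neg_eq_log]
  simp [Faux, h0, Real.arcsin_one, hlog]

lemma Faux_neg_one {x : ℝ} (hx : x ∈ Ioo (-1:ℝ) 1) : Faux x (-1) = π/2 := by
  have h0 : (1:ℝ) - (-1) ^ 2 = 0 := by norm_num
  have hlog : Real.log (1 - x * (-1) + Real.sqrt (1 - x ^ 2) * Real.sqrt 0)
      = Real.log (x - (-1)) := by
    rw [Real.sqrt_zero]; ring_nf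
  have h2 : Real.log (1 + x) = Real.log (x + 1) := by rw [add_comm]
  simp [Faux, h0, Real.arcsin_neg_one, hlog, h2]

/-- The function `φ(x) = -2√(1-x²)` on `𝔻₁ = (-1,1)` satisfies
`(1/2π) f.p.∫_{𝔻₁\(x-η,x+η)} φ(y)/|x-y|² dy → 1` as `η ↓ 0` (Hadamard finite part)
for all `x ∈ (-1,1)`, and `∫_{-1}^1 φ = -π`. -/
theorem stmt_16 :
    (∀ x ∈ Ioo (-1 : ℝ) 1,
      Tendsto (fun η : ℝ =>
          (1 / (2 * π)) *
            ((∫ y in Ioo (-1 : ℝ) 1 \ Ioo (x - η) (x + η), phiDip y / |x - y| ^ 2)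
              - 2 * phiDip x / η))
        (𝓝[>] 0) (𝓝 1)) ∧
    ∫ x in Ioo (-1 : ℝ) 1, phiDip x = -π := by
  constructor
  · intro x hx
    have hs2 : (0:ℝ) < 1 - x ^ 2 := by nlinarith [hx.1, hx.2]
    have hs : 0 < Real.sqrt (1 - x ^ 2) := Real.sqrt_pos.mpr hs2
    have hssq : Real.sqrt (1 - x ^ 2) * Real.sqrt (1 - x ^ 2) = 1 - x ^ 2 :=
      Real.mul_self_sqrt hs2.le
    set δ : ℝ := min (1 + x) (1 - x) with hδ_def
    have hδ : 0 < δ := lt_min (by linarith [hx.1]) (by linarith [hx.2])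
    -- the key limit
    have hD : Tendsto (fun η : ℝ =>
        Faux x (x - η) - Faux x (x + η) - 2 * Real.sqrt (1 - x ^ 2) / η)
        (𝓝[>] (0:ℝ)) (𝓝 0) := by
      have hmono : 𝓝[>] (0:ℝ) ≤ 𝓝[≠] (0:ℝ) :=
        nhdsWithin_mono 0 (fun a ha => by simpa using (ne_of_gt ha))
      have hg1 : HasDerivAt (fun η : ℝ => Real.sqrt (1 - (x - η) ^ 2))
          (x / Real.sqrt (1 - x ^ 2)) 0 := by
        have hv : HasDerivAt (fun η : ℝ => x - η) (-1) 0 := by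
          simpa using ((hasDerivAt_id (0:ℝ)).const_sub x)
        have hw : HasDerivAt (fun η : ℝ => 1 - (x - η) ^ 2) (2 * x) 0 := by
          have := ((hv.pow 2).const_sub 1)
          refine this.congr_deriv ?_
          norm_num
        have := (Real.hasDerivAt_sqrt (by simpa using hs2.ne')).comp 0 hw
        simp only [sub_zero] at this
        refine this.congr_deriv ?_
        field_simp
      have hg2 : HasDerivAt (fun η : ℝ => Real.sqrt (1 - (x + η) ^ 2))
          (-x / Real.sqrt (1 - x ^ 2)) 0 := by
        have hv : HasDerivAt (fun η : ℝ => x + η) 1 0 := by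
          simpa using ((hasDerivAt_id (0:ℝ)).const_add x)
        have hw : HasDerivAt (fun η : ℝ => 1 - (x + η) ^ 2) (-(2 * x)) 0 := by
          have := ((hv.pow 2).const_sub 1)
          refine this.congr_deriv ?_
          norm_num
        have := (Real.hasDerivAt_sqrt (by simpa using hs2.ne')).comp 0 hw
        simp only [add_zero] at this
        refine this.congr_deriv ?_
        field_simp
      have ht1 : Tendsto (fun η : ℝ =>
          (Real.sqrt (1 - (x - η) ^ 2) - Real.sqrt (1 - x ^ 2)) / η)
          (𝓝[>] (0:ℝ)) (𝓝 (x / Real.sqrt (1 - x ^ 2))) := by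
        have := (hasDerivAt_iff_tendsto_slope.mp hg1).mono_left hmono
        apply this.congr'
        filter_upwards [self_mem_nhdsWithin] with η hη
        simp [slope_def_field]
      have ht2 : Tendsto (fun η : ℝ =>
          (Real.sqrt (1 - (x + η) ^ 2) - Real.sqrt (1 - x ^ 2)) / η)
          (𝓝[>] (0:ℝ)) (𝓝 (-x / Real.sqrt (1 - x ^ 2))) := by
        have := (hasDerivAt_iff_tendsto_slope.mp hg2).mono_left hmono
        apply this.congr'
        filter_upwards [self_mem_nhdsWithin] with η hη
        simp [slope_def_field]
      have ht3 : Tendsto (fun η : ℝ => Real.arcsin (x + η) - Real.arcsin (x - η))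
          (𝓝[>] (0:ℝ)) (𝓝 0) := by
        have hplus : Tendsto (fun η : ℝ => x + η) (𝓝 0) (𝓝 x) := by
          simpa using (tendsto_const_nhds.add (tendsto_id : Tendsto (fun η : ℝ => η) (𝓝 0) (𝓝 0)))
        have hminus : Tendsto (fun η : ℝ => x - η) (𝓝 0) (𝓝 x) := by
          simpa using (tendsto_const_nhds.sub (tendsto_id : Tendsto (fun η : ℝ => η) (𝓝 0) (𝓝 0)))
        have := ((Real.continuous_arcsin.continuousAt.tendsto.comp hplus).sub
          (Real.continuous_arcsin.continuousAt.tendsto.comp hminus))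
        simpa using this.mono_left nhdsWithin_le_nhds
      have ht4 : Tendsto (fun η : ℝ =>
          Real.log (1 - x * (x - η) + Real.sqrt (1 - x ^ 2) * Real.sqrt (1 - (x - η) ^ 2)) -
          Real.log (1 - x * (x + η) + Real.sqrt (1 - x ^ 2) * Real.sqrt (1 - (x + η) ^ 2)))
          (𝓝[>] (0:ℝ)) (𝓝 0) := by
        have hsqrtc : Continuous (fun y : ℝ => Real.sqrt (1 - y ^ 2)) :=
          Real.continuous_sqrt.comp (continuous_const.sub (continuous_pow 2))
        have hc1 : Continuous (fun η : ℝ =>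
            1 - x * (x - η) + Real.sqrt (1 - x ^ 2) * Real.sqrt (1 - (x - η) ^ 2)) := by
          apply Continuous.add
          · exact continuous_const.sub (continuous_const.mul (continuous_const.sub continuous_id))
          · exact continuous_const.mul (hsqrtc.comp (continuous_const.sub continuous_id))
        have hc2 : Continuous (fun η : ℝ =>
            1 - x * (x + η) + Real.sqrt (1 - x ^ 2) * Real.sqrt (1 - (x + η) ^ 2)) := by
          apply Continuous.add
          · exact continuous_const.sub (continuous_const.mul (continuous_const.add continuous_id))
          · exact continuous_const.mul (hsqrtc.comp (continuous_const.add continuous_id))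
        have hne : (2 : ℝ) * (1 - x ^ 2) ≠ 0 := by positivity
        have hv1 : 1 - x * x + Real.sqrt (1 - x ^ 2) * Real.sqrt (1 - x ^ 2)
            = 2 * (1 - x ^ 2) := by linear_combination hssq
        have c1t : Tendsto (fun η : ℝ =>
            1 - x * (x - η) + Real.sqrt (1 - x ^ 2) * Real.sqrt (1 - (x - η) ^ 2))
            (𝓝 0) (𝓝 (2 * (1 - x ^ 2))) := by
          have h := hc1.tendsto 0
          simp only [sub_zero] at h
          rwa [hv1] at h
        have c2t : Tendsto (fun η : ℝ =>
            1 - x * (x + η) + Real.sqrt (1 - x ^ 2) * Real.sqrt (1 - (x + η) ^ 2))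
            (𝓝 0) (𝓝 (2 * (1 - x ^ 2))) := by
          have h := hc2.tendsto 0
          simp only [add_zero] at h
          rwa [hv1] at h
        have l1 := (Real.continuousAt_log hne).tendsto.comp c1t
        have l2 := (Real.continuousAt_log hne).tendsto.comp c2t
        simpa using (l1.sub l2).mono_left nhdsWithin_le_nhds
      have htotal := ((ht1.add ht2).add ht3).add (ht4.const_mul (x / Real.sqrt (1 - x ^ 2)))
      have hzero : x / Real.sqrt (1 - x ^ 2) + -x / Real.sqrt (1 - x ^ 2) + 0 +
          x / Real.sqrt (1 - x ^ 2) * 0 = 0 := by ring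
      rw [hzero] at htotal
      apply htotal.congr'
      filter_upwards [self_mem_nhdsWithin] with η hη
      have hηne : (η:ℝ) ≠ 0 := ne_of_gt hη
      have e1 : x - (x - η) = η := by ring
      have e2 : x - (x + η) = -η := by ring
      simp only [Faux, e1, e2, Real.log_neg_eq_log, div_neg]
      field_simp
      ring
    -- turn the key limit into the stated limit, via eventual equality
    have hπ : (π:ℝ) ≠ 0 := Real.pi_ne_zero
    have hfinal : Tendsto (fun η : ℝ =>
        1 - (Faux x (x - η) - Faux x (x + η) - 2 * Real.sqrt (1 - x ^ 2) / η) / π)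
        (𝓝[>] (0:ℝ)) (𝓝 1) := by
      have := (hD.div_const π)
      simpa using (tendsto_const_nhds (x := (1:ℝ)) (f := 𝓝[>] (0:ℝ))).sub this
    apply hfinal.congr'
    filter_upwards [Ioo_mem_nhdsGT_of_mem ⟨le_refl (0:ℝ), hδ⟩] with η hη
    obtain ⟨hη0, hηδ⟩ := hη
    have hη1 : -1 < x - η := by
      have := lt_of_lt_of_le hηδ (min_le_left _ _); linarith
    have hη2 : x + η < 1 := by
      have := lt_of_lt_of_le hηδ (min_le_right _ _); linarith
    have hset : Ioo (-1:ℝ) 1 \ Ioo (x - η) (x + η) = Ioc (-1) (x - η) ∪ Ico (x + η) 1 := by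
      ext y
      simp only [mem_diff, mem_Ioo, mem_union, mem_Ioc, mem_Ico, not_and, not_lt]
      constructor
      · rintro ⟨⟨hy1, hy2⟩, hy3⟩
        rcases le_or_gt y (x - η) with h | h
        · exact Or.inl ⟨hy1, h⟩
        · exact Or.inr ⟨hy3 h, hy2⟩
      · rintro (⟨hy1, hy2⟩ | ⟨hy1, hy2⟩)
        · exact ⟨⟨hy1, by linarith⟩, fun h => by linarith⟩
        · exact ⟨⟨by linarith, hy2⟩, fun h => by linarith⟩
    have hgeq : ∀ y : ℝ, phiDip y / |x - y| ^ 2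
        = -2 * (Real.sqrt (1 - y ^ 2) / (x - y) ^ 2) := by
      intro y
      rw [phiDip, sq_abs, mul_div_assoc]
    have hint1 : IntegrableOn (fun y => phiDip y / |x - y| ^ 2) (Ioc (-1:ℝ) (x - η)) volume := by
      apply IntegrableOn.mono_set _ Ioc_subset_Icc_self
      apply ContinuousOn.integrableOn_Icc
      simp only [hgeq]
      apply ContinuousOn.mul continuousOn_const
      apply ContinuousOn.div
      · exact (Real.continuous_sqrt.comp (continuous_const.sub (continuous_pow 2))).continuousOn
      · exact ((continuous_const.sub continuous_id).pow 2).continuousOn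
      · intro y hy
        have : y ≠ x := by intro h; rw [h] at hy; exact absurd hy.2 (by linarith)
        exact pow_ne_zero _ (sub_ne_zero.mpr (Ne.symm this))
    have hint2 : IntegrableOn (fun y => phiDip y / |x - y| ^ 2) (Ico (x + η) 1) volume := by
      apply IntegrableOn.mono_set _ Ico_subset_Icc_self
      apply ContinuousOn.integrableOn_Icc
      simp only [hgeq]
      apply ContinuousOn.mul continuousOn_const
      apply ContinuousOn.div
      · exact (Real.continuous_sqrt.comp (continuous_const.sub (continuous_pow 2))).continuousOn
      · exact ((continuous_const.sub continuous_id).pow 2).continuousOn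
      · intro y hy
        have : y ≠ x := by intro h; rw [h] at hy; exact absurd hy.1 (by linarith)
        exact pow_ne_zero _ (sub_ne_zero.mpr (Ne.symm this))
    have hdisj : Disjoint (Ioc (-1:ℝ) (x - η)) (Ico (x + η) 1) := by
      apply Set.disjoint_left.mpr
      intro y hy1 hy2
      have := hy1.2; have := hy2.1; linarith
    have hIval : (∫ y in Ioo (-1:ℝ) 1 \ Ioo (x - η) (x + η), phiDip y / |x - y| ^ 2)
        = -2 * (Faux x (x - η) - Faux x (x + η)) + 2 * π := by
      rw [hset, setIntegral_union hdisj measurableSet_Ico hint1 hint2]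
      have i1 : (∫ y in Ioc (-1:ℝ) (x - η), phiDip y / |x - y| ^ 2)
          = -2 * (Faux x (x - η) - π / 2) := by
        rw [← intervalIntegral.integral_of_le (by linarith : (-1:ℝ) ≤ x - η)]
        simp only [hgeq]
        rw [intervalIntegral.integral_const_mul,
          Faux_ftc hx le_rfl (by linarith) (by linarith)
            (fun h => by have := h.2; linarith), Faux_neg_one hx]
      have i2 : (∫ y in Ico (x + η) 1, phiDip y / |x - y| ^ 2)
          = -2 * (-(π/2) - Faux x (x + η)) := by
        rw [integral_Ico_eq_integral_Ioo, ← integral_Ioc_eq_integral_Ioo,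
          ← intervalIntegral.integral_of_le (by linarith : x + η ≤ 1)]
        simp only [hgeq]
        rw [intervalIntegral.integral_const_mul,
          Faux_ftc hx (by linarith) (by linarith) le_rfl
            (fun h => by have := h.1; linarith), Faux_one hx]
      rw [i1, i2]; ring
    rw [hIval]
    have hphix : phiDip x = -2 * Real.sqrt (1 - x ^ 2) := by rw [phiDip]
    rw [hphix]
    field_simp
    ring
  · have h1 : (∫ x in Ioo (-1:ℝ) 1, phiDip x) = ∫ x in (-1:ℝ)..1, phiDip x := by
      rw [intervalIntegral.integral_of_le (by norm_num : (-1:ℝ) ≤ 1),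
        integral_Ioc_eq_integral_Ioo]
    rw [h1]
    simp only [phiDip]
    rw [intervalIntegral.integral_const_mul, integral_sqrt_one_sub_sq]
    ring
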